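/- Let u, v ∈ V with |N_u^+ ∩ N_v^+| ≥ |N_u^+|/2. Then the probability that W^{(u,v)} ≤ (1−ε)·|N_u^+ ∩ N_v^+| is at most n^{−ε²C(ε)/8} = n^{−4}, and the probability that W^{(u,v)} ≥ (1+ε)·|N_u^+ ∩ N_v^+| is at most n^{−4}. -/

import Mathlib

open Finset

/-- Positive neighborhood of `u`. -/
def Np {V : Type*} [Fintype V] (pos : V → V → Bool) (u : V) : Finset V :=
  Finset.univ.filter (fun v => pos u v)

/-- Negative neighborhood of `u`. -/
def Nm {V : Type*} [Fintype V] (pos : V → V → Bool) (u : V) : Finset V :=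
  Finset.univ.filter (fun v => ¬ pos u v)

/-- The correlation metric. -/
noncomputable def corrDist {V : Type*} [Fintype V] [DecidableEq V]
    (pos : V → V → Bool) (u v : V) : ℝ :=
  1 - ((Np pos u ∩ Np pos v).card : ℝ) /
      ((Fintype.card V : ℝ) - ((Nm pos u ∩ Nm pos v).card : ℝ))

/-- Number of disagreements incident to `u` under the clustering `C`. -/
def yC {V : Type*} [Fintype V] [DecidableEq V] (pos : V → V → Bool) (C : V → ℕ) (u : V) : ℕ :=
  (Finset.univ.filter (fun v => v ≠ u ∧
    ((pos u v ∧ C u ≠ C v) ∨ (¬ (pos u v) ∧ C u = C v)))).card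

/-- Optimal value of the Min Max correlation clustering objective. -/
noncomputable def OPT {V : Type*} [Fintype V] [DecidableEq V] (pos : V → V → Bool) : ℕ :=
  sInf { k : ℕ | ∃ C : V → ℕ, k = Finset.univ.sup (yC pos C) }

/-- `d̂`. -/
noncomputable def dhat {V : Type*} [Fintype V] [DecidableEq V]
    (pos : V → V → Bool) (u v : V) : ℝ :=
  if pos u v then corrDist pos u v else 1 - corrDist pos u v

/-- number of samples. -/
noncomputable def mSample (V : Type*) [Fintype V] (ε : ℝ) : ℕ :=
  ⌈(32 / ε ^ 2) * Real.log (Fintype.card V)⌉₊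

/-- Sample space: one subset of `N_u^+` of size `min m |N_u^+|` per vertex `u`. -/
abbrev SampleSpace {V : Type*} [Fintype V] [DecidableEq V]
    (pos : V → V → Bool) (m : ℕ) : Type _ :=
  ∀ u : V, {s : Finset V // s ⊆ Np pos u ∧ s.card = min m (Np pos u).card}

/-- Uniform probability of an event over a finite sample space. -/
noncomputable def prob {Ω : Type*} [Fintype Ω] (E : Set Ω) : ℝ :=
  (E.ncard : ℝ) / (Fintype.card Ω : ℝ)

noncomputable def West {V : Type*} [Fintype V] [DecidableEq V]
    (pos : V → V → Bool) {m : ℕ} (ω : SampleSpace pos m) (u v : V) : ℝ :=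
  if m ≤ (Np pos u).card then
    ((Np pos u).card : ℝ) / m * (((ω u).1 ∩ Np pos v).card : ℝ)
  else ((Np pos u ∩ Np pos v).card : ℝ)

noncomputable def Yest {V : Type*} [Fintype V] [DecidableEq V]
    (pos : V → V → Bool) {m : ℕ} (ω : SampleSpace pos m) (u v : V) : ℝ :=
  if m ≤ (Np pos u).card then
    ((Np pos u).card : ℝ) / m * (((ω u).1 ∩ Nm pos v).card : ℝ)
  else ((Np pos u ∩ Nm pos v).card : ℝ)

/-- Initial estimate of the correlation metric for a pair labeled with `|N_v^+| ≥ |N_u^+|`. -/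
noncomputable def dbar {V : Type*} [Fintype V] [DecidableEq V]
    (pos : V → V → Bool) {m : ℕ} (ω : SampleSpace pos m) (u v : V) : ℝ :=
  (Yest pos ω u v + Yest pos ω v u) / (((Np pos u).card : ℝ) + Yest pos ω v u)

/-- Initial estimate, with the pair relabeled so the vertex with larger
positive neighborhood comes second. -/
noncomputable def dbarS {V : Type*} [Fintype V] [DecidableEq V]
    (pos : V → V → Bool) {m : ℕ} (ω : SampleSpace pos m) (u v : V) : ℝ :=
  if (Np pos u).card ≤ (Np pos v).card then dbar pos ω u v else dbar pos ω v u

noncomputable def cc1 (ε : ℝ) : ℝ := (1 + ε) / (1 - ε)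
noncomputable def hh1 (ε : ℝ) : ℝ := 2 * ε / (1 - ε)
noncomputable def cc2 (ε : ℝ) : ℝ := (1 + ε) / (1 - ε)
noncomputable def hh2 (ε : ℝ) : ℝ := 2 * ε / (1 - ε)
noncomputable def cc3 (ε : ℝ) : ℝ := ((1 + ε) / (1 - ε)) ^ 2
noncomputable def hh3 (ε : ℝ) : ℝ := (2 * ε / (1 - ε)) * (1 + 2 * (1 + ε) / (1 - ε))
noncomputable def cc4 (ε : ℝ) : ℝ := (2 * cc3 ε + 1) * cc3 ε
noncomputable def hh4 (ε : ℝ) : ℝ := (4 * cc3 ε + 1) * (2 * cc3 ε + 1) * hh3 ε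
noncomputable def DD (ε : ℝ) : ℝ := 2 * cc3 ε

/-- Post-processed estimate. -/
noncomputable def dtilde {V : Type*} [Fintype V] [DecidableEq V] (ε : ℝ)
    (pos : V → V → Bool) {m : ℕ} (ω : SampleSpace pos m) (u v : V) : ℝ :=
  if pos u v ∧ dbarS pos ω u v ≤ 2 * hh3 ε then 0
  else if ¬ (pos u v) ∧ 1 / (2 * cc3 ε + 1) ≤ dbarS pos ω u v then 1
  else dbarS pos ω u v

/-- The radius `r(δ₁, δ₂)` from Appendix B. -/
noncomputable def rr (δ1 δ2 : ℝ) : ℝ :=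
  (1 - δ2 - δ1 * δ2 - δ1 ^ 2 * δ2 - δ1 ^ 3 * δ2) /
    (δ1 ^ 2 + δ1 ^ 3 * (δ1 + 1) + δ1 + 1)

noncomputable def c1const (δ1 δ2 : ℝ) : ℝ := δ1 + δ2 / rr δ1 δ2
noncomputable def bconst (δ1 δ2 : ℝ) : ℝ := (c1const δ1 δ2 + 1) * δ1 + δ2 / rr δ1 δ2
noncomputable def c2const (δ1 δ2 : ℝ) : ℝ := δ1 * (bconst δ1 δ2 + 1) + δ2 / rr δ1 δ2



lemma aux_log_quadratic_lb {x : ℝ} (hx : 0 ≤ x) : x - x^2/2 ≤ Real.log (1+x) := by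
  have key : MonotoneOn (fun t : ℝ => Real.log (1+t) - t + t^2/2) (Set.Ici 0) := by
    have hderiv : ∀ t ∈ interior (Set.Ici (0:ℝ)),
        HasDerivAt (fun t : ℝ => Real.log (1+t) - t + t^2/2) ((1+t)⁻¹ - 1 + t) t := by
      intro t ht
      rw [interior_Ici, Set.mem_Ioi] at ht
      have h1 : (0:ℝ) < 1 + t := by linarith
      have hlog : HasDerivAt (fun t : ℝ => Real.log (1+t)) ((1+t)⁻¹) t := by
        have := ((hasDerivAt_id t).const_add (1:ℝ)).log (ne_of_gt h1)
        simpa using this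
      have hsq : HasDerivAt (fun t : ℝ => t^2/2) t t := by
        have := (hasDerivAt_pow 2 t).div_const 2
        norm_num at this
        simpa using this
      exact (hlog.sub (hasDerivAt_id t)).add hsq
    apply monotoneOn_of_deriv_nonneg (convex_Ici 0)
    · apply ContinuousOn.add
      apply ContinuousOn.sub
      · apply Real.continuousOn_log.comp (by fun_prop)
        intro t ht
        simp only [Set.mem_Ici] at ht
        simp only [Set.mem_compl_iff, Set.mem_singleton_iff]
        intro hc; linarith [hc ▸ ht]
      · fun_prop
      · fun_prop
    · intro t ht
      exact ((hderiv t ht).differentiableAt).differentiableWithinAt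
    · intro t ht
      rw [(hderiv t ht).deriv]
      rw [interior_Ici, Set.mem_Ioi] at ht
      have h1 : (0:ℝ) < 1 + t := by linarith
      have : (1+t)⁻¹ - 1 + t = t^2/(1+t) := by field_simp; ring
      rw [this]
      positivity
  have h0 : (0:ℝ) ∈ Set.Ici (0:ℝ) := Set.mem_Ici.mpr le_rfl
  have := key h0 (Set.mem_Ici.mpr hx) hx
  simp only [Real.log_one, add_zero] at this
  norm_num at this
  linarith


lemma aux_card_supersets {V : Type*} [DecidableEq V] (P T : Finset V) (m : ℕ)
    (hT : T ⊆ P) (htm : T.card ≤ m) :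
    ((P.powersetCard m).filter (fun s => T ⊆ s)).card
      = (P.card - T.card).choose (m - T.card) := by
  rw [← Finset.card_sdiff_of_subset hT, ← Finset.card_powersetCard]
  apply Finset.card_bij' (fun s _ => s \ T) (fun s _ => s ∪ T)
  · intro s hs
    rw [Finset.mem_filter, Finset.mem_powersetCard] at hs
    rw [Finset.mem_powersetCard]
    exact ⟨Finset.sdiff_subset_sdiff hs.1.1 (le_refl _), by rw [Finset.card_sdiff_of_subset hs.2, hs.1.2]⟩
  · intro s hs
    rw [Finset.mem_powersetCard] at hs
    have hdisj : Disjoint s T := (Finset.subset_sdiff.mp hs.1).2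
    rw [Finset.mem_filter, Finset.mem_powersetCard]
    refine ⟨⟨Finset.union_subset ((Finset.subset_sdiff.mp hs.1).1) hT, ?_⟩, Finset.subset_union_right⟩
    rw [Finset.card_union_of_disjoint hdisj, hs.2]
    omega
  · intro s hs
    rw [Finset.mem_filter] at hs
    exact Finset.sdiff_union_of_subset hs.2
  · intro s hs
    rw [Finset.mem_powersetCard] at hs
    have hdisj : Disjoint s T := (Finset.subset_sdiff.mp hs.1).2
    rw [Finset.union_sdiff_distrib, Finset.sdiff_self, Finset.union_empty,
      Finset.sdiff_eq_self_of_disjoint hdisj]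

lemma aux_choose_ratio {N m : ℕ} (hm : m ≤ N) :
    ∀ t, t ≤ m → ((N - t).choose (m - t) : ℝ) * (N:ℝ) ^ t ≤ (N.choose m : ℝ) * (m:ℝ) ^ t := by
  intro t
  induction t with
  | zero => simp
  | succ t ih =>
    intro h
    have htm : t < m := h
    have htN : t < N := lt_of_lt_of_le htm hm
    have ihh := ih (le_of_lt htm)
    have hid : (N - t) * (N - t - 1).choose (m - t - 1) = (N - t).choose (m - t) * (m - t) := by
      have h1 : N - t = (N - t - 1) + 1 := by omega
      have h2 : m - t = (m - t - 1) + 1 := by omega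
      rw [h1, h2]
      simp only [Nat.add_sub_cancel]
      rw [Nat.add_one_mul_choose_eq]
    have hidR : ((N:ℝ) - t) * ((N - t - 1).choose (m - t - 1) : ℝ)
        = ((N - t).choose (m - t) : ℝ) * ((m:ℝ) - t) := by
      have := congrArg (Nat.cast (R := ℝ)) hid
      push_cast [Nat.cast_sub (le_of_lt htN), Nat.cast_sub (le_of_lt htm)] at this ⊢
      convert this using 2 <;> omega
    have hNt : (0:ℝ) < (N:ℝ) - t := by
      have : (t:ℝ) < N := by exact_mod_cast htN
      linarith
    have hmt : (0:ℝ) ≤ (m:ℝ) - t := by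
      have : (t:ℝ) ≤ m := by exact_mod_cast le_of_lt htm
      linarith
    have hmN : (m:ℝ) ≤ (N:ℝ) := by exact_mod_cast hm
    have hN0 : (0:ℝ) ≤ (N:ℝ) := by positivity
    have e1 : N - (t+1) = N - t - 1 := by omega
    have e2 : m - (t+1) = m - t - 1 := by omega
    rw [e1, e2]
    refine le_of_mul_le_mul_left ?_ hNt
    have expand : ((N:ℝ)-t) * (((N - t - 1).choose (m - t - 1) : ℝ) * (N:ℝ)^(t+1))
        = (((N - t).choose (m - t) : ℝ) * (N:ℝ)^t) * (((m:ℝ)-t) * N) := by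
      linear_combination ((N:ℝ)^(t+1)) * hidR
    rw [expand]
    have step1 : (((N - t).choose (m - t) : ℝ) * (N:ℝ)^t) * (((m:ℝ)-t) * N)
        ≤ ((N.choose m : ℝ) * (m:ℝ)^t) * (((m:ℝ)-t) * N) := by
      apply mul_le_mul_of_nonneg_right ihh
      positivity
    have step2 : ((N.choose m : ℝ) * (m:ℝ)^t) * (((m:ℝ)-t) * N)
        ≤ ((N.choose m : ℝ) * (m:ℝ)^t) * ((m:ℝ) * ((N:ℝ)-t)) := by
      apply mul_le_mul_of_nonneg_left _ (by positivity)
      nlinarith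
    calc (((N - t).choose (m - t) : ℝ) * (N:ℝ)^t) * (((m:ℝ)-t) * N)
        ≤ ((N.choose m : ℝ) * (m:ℝ)^t) * ((m:ℝ) * ((N:ℝ)-t)) := le_trans step1 step2
      _ = ((N:ℝ)-t) * ((N.choose m : ℝ) * (m:ℝ)^(t+1)) := by ring


lemma aux_sum_pow_powerset {V : Type*} [DecidableEq V] (A : Finset V) (y : ℝ) :
    ∑ T ∈ A.powerset, y ^ T.card = (1 + y) ^ A.card := by
  have := Finset.sum_pow_mul_eq_add_pow y (1:ℝ) A
  simp only [one_pow, mul_one] at this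
  rw [this]; ring

lemma aux_mgf {V : Type*} [DecidableEq V] (P A : Finset V) (hA : A ⊆ P) {m : ℕ}
    (hm : m ≤ P.card) (hN : 0 < P.card) {x : ℝ} (hx : 0 ≤ x) :
    ∑ s ∈ P.powersetCard m, ((1 + x) ^ (s ∩ A).card : ℝ)
      ≤ (P.card.choose m : ℝ) * Real.exp (x * m * A.card / P.card) := by
  have hNR : (0:ℝ) < P.card := by exact_mod_cast hN
  -- expand each term over subsets
  have expand : ∀ s ∈ P.powersetCard m,
      ((1 + x) ^ (s ∩ A).card : ℝ) = ∑ T ∈ A.powerset, (if T ⊆ s then x ^ T.card else 0) := by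
    intro s _
    rw [← aux_sum_pow_powerset (s ∩ A) x]
    rw [← Finset.sum_filter]
    congr 1
    ext T
    simp only [Finset.mem_powerset, Finset.mem_filter, Finset.subset_inter_iff]
    tauto
  rw [Finset.sum_congr rfl expand, Finset.sum_comm]
  have swap : ∀ T ∈ A.powerset,
      ∑ s ∈ P.powersetCard m, (if T ⊆ s then x ^ T.card else 0)
        = (((P.powersetCard m).filter (fun s => T ⊆ s)).card : ℝ) * x ^ T.card := by
    intro T _
    rw [← Finset.sum_filter, Finset.sum_const, nsmul_eq_mul]
  rw [Finset.sum_congr rfl swap]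
  -- bound each count
  have hcount : ∀ T ∈ A.powerset,
      (((P.powersetCard m).filter (fun s => T ⊆ s)).card : ℝ) * x ^ T.card
        ≤ (P.card.choose m : ℝ) * (x * m / P.card) ^ T.card := by
    intro T hT
    rw [Finset.mem_powerset] at hT
    by_cases htm : T.card ≤ m
    · rw [aux_card_supersets P T m (hT.trans hA) htm]
      have hratio := aux_choose_ratio hm T.card htm
      have hNpow : (0:ℝ) < ((P.card:ℝ)) ^ T.card := by positivity
      have key := mul_le_mul_of_nonneg_right hratio (pow_nonneg hx T.card)
      rw [show ((P.card.choose m : ℝ)) * (x * (m:ℝ) / ((P.card:ℝ))) ^ T.card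
          = ((P.card.choose m : ℝ) * (m:ℝ) ^ T.card * x ^ T.card) / ((P.card:ℝ)) ^ T.card by
          rw [div_pow, mul_pow]; ring, le_div_iff₀ hNpow]
      calc ((P.card - T.card).choose (m - T.card) : ℝ) * x ^ T.card * ((P.card:ℝ)) ^ T.card
          = ((P.card - T.card).choose (m - T.card) : ℝ) * ((P.card:ℝ)) ^ T.card * x ^ T.card := by ring
        _ ≤ (P.card.choose m : ℝ) * (m:ℝ) ^ T.card * x ^ T.card := key
    · have : ((P.powersetCard m).filter (fun s => T ⊆ s)) = ∅ := by
        apply Finset.filter_eq_empty_iff.mpr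
        intro s hs
        rw [Finset.mem_powersetCard] at hs
        intro hTs
        exact htm (hs.2 ▸ Finset.card_le_card hTs)
      rw [this]
      simp only [Finset.card_empty, Nat.cast_zero, zero_mul]
      positivity
  calc ∑ T ∈ A.powerset, (((P.powersetCard m).filter (fun s => T ⊆ s)).card : ℝ) * x ^ T.card
      ≤ ∑ T ∈ A.powerset, (P.card.choose m : ℝ) * (x * m / P.card) ^ T.card :=
        Finset.sum_le_sum hcount
    _ = (P.card.choose m : ℝ) * (1 + x * m / P.card) ^ A.card := by
        rw [← Finset.mul_sum, aux_sum_pow_powerset]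
    _ ≤ (P.card.choose m : ℝ) * Real.exp (x * m * A.card / P.card) := by
        apply mul_le_mul_of_nonneg_left _ (by positivity)
        have h1 : (1 + x * m / P.card) ^ A.card ≤ Real.exp (x * m / P.card) ^ A.card := by
          apply pow_le_pow_left₀ (by positivity)
          have := Real.add_one_le_exp (x * m / P.card)
          linarith
        calc (1 + x * m / P.card) ^ A.card ≤ Real.exp (x * m / P.card) ^ A.card := h1
          _ = Real.exp (x * m / P.card * A.card) := by
              rw [← Real.exp_nat_mul]; ring_nf
          _ = Real.exp (x * m * A.card / P.card) := by ring_nf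

lemma aux_tail {V : Type*} [DecidableEq V] (P A : Finset V) (hA : A ⊆ P) {m : ℕ}
    (hm : m ≤ P.card) (hN : 0 < P.card) {x r : ℝ} (hx : 0 ≤ x)
    (Pred : Finset V → Prop) [DecidablePred Pred]
    (hPred : ∀ s ∈ P.powersetCard m, Pred s → r ≤ ((s ∩ A).card : ℝ)) :
    (((P.powersetCard m).filter Pred).card : ℝ)
      ≤ (P.card.choose m : ℝ) *
        Real.exp (x * m * A.card / P.card - r * Real.log (1 + x)) := by
  have h1x : (0:ℝ) < 1 + x := by linarith
  have hL : 0 ≤ Real.log (1+x) := Real.log_nonneg (by linarith)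
  have step1 : (((P.powersetCard m).filter Pred).card : ℝ) * Real.exp (r * Real.log (1 + x))
      ≤ ∑ s ∈ P.powersetCard m, ((1 + x) ^ (s ∩ A).card : ℝ) := by
    calc (((P.powersetCard m).filter Pred).card : ℝ) * Real.exp (r * Real.log (1 + x))
        = ∑ _s ∈ (P.powersetCard m).filter Pred, Real.exp (r * Real.log (1 + x)) := by
          rw [Finset.sum_const, nsmul_eq_mul]
      _ ≤ ∑ s ∈ (P.powersetCard m).filter Pred, ((1 + x) ^ (s ∩ A).card : ℝ) := by
          apply Finset.sum_le_sum
          intro s hs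
          rw [Finset.mem_filter] at hs
          have hr2 : r ≤ ((s ∩ A).card : ℝ) := hPred s hs.1 hs.2
          calc Real.exp (r * Real.log (1 + x))
              ≤ Real.exp (((s ∩ A).card : ℝ) * Real.log (1 + x)) := by
                apply Real.exp_le_exp.mpr
                exact mul_le_mul_of_nonneg_right hr2 hL
            _ = (1 + x) ^ (s ∩ A).card := by
                rw [Real.exp_nat_mul, Real.exp_log h1x]
      _ ≤ ∑ s ∈ P.powersetCard m, ((1 + x) ^ (s ∩ A).card : ℝ) := by
          apply Finset.sum_le_sum_of_subset_of_nonneg (Finset.filter_subset _ _)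
          intro s _ _
          positivity
  have step2 := aux_mgf P A hA hm hN hx
  have hE : (0:ℝ) < Real.exp (r * Real.log (1+x)) := Real.exp_pos _
  have key := le_trans step1 step2
  calc (((P.powersetCard m).filter Pred).card : ℝ)
      = (((P.powersetCard m).filter Pred).card : ℝ) * Real.exp (r * Real.log (1 + x))
          / Real.exp (r * Real.log (1 + x)) := by field_simp
    _ ≤ (P.card.choose m : ℝ) * Real.exp (x * m * A.card / P.card)
          / Real.exp (r * Real.log (1 + x)) := by
        gcongr
    _ = (P.card.choose m : ℝ) *
        Real.exp (x * m * A.card / P.card - r * Real.log (1 + x)) := by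
        rw [Real.exp_sub]; ring


lemma aux_prob_coord {V : Type*} [Fintype V] [DecidableEq V] (pos : V → V → Bool)
    (m : ℕ) (u : V) (Pred : Finset V → Prop) [DecidablePred Pred] :
    prob {ω : SampleSpace pos m | Pred (ω u).1} =
      ((((Np pos u).powersetCard (min m (Np pos u).card)).filter Pred).card : ℝ) /
        (((Np pos u).card.choose (min m (Np pos u).card)) : ℝ) := by
  classical
  set F : V → Type _ := fun w => {s : Finset V // s ⊆ Np pos w ∧ s.card = min m (Np pos w).card}
    with hF
  have hfib : ∀ w, Nat.card (F w) = (Np pos w).card.choose (min m (Np pos w).card) := by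
    intro w
    rw [Nat.card_eq_fintype_card, Fintype.card_subtype, ← Finset.card_powersetCard]
    congr 1
    ext s
    simp [Finset.mem_powersetCard]
  have hne : ∀ w, Nonempty (F w) := by
    intro w
    obtain ⟨t, ht, hcard⟩ := Finset.exists_subset_card_eq
      (min_le_right m (Np pos w).card)
    exact ⟨⟨t, ht, hcard⟩⟩
  set R := ∀ w : {w : V // w ≠ u}, F w.1 with hR
  let e1 : {ω : ∀ w, F w // Pred (ω u).1} ≃ {p : F u × R // Pred p.1.1} :=
    (Equiv.piSplitAt u F).subtypeEquiv (fun ω => Iff.rfl)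
  let e2 : {p : F u × R // Pred p.1.1} ≃ {s : F u // Pred s.1} × R :=
    { toFun := fun p => (⟨p.1.1, p.2⟩, p.1.2)
      invFun := fun q => ⟨(q.1.1, q.2), q.1.2⟩
      left_inv := fun p => rfl
      right_inv := fun q => rfl }
  have hE : Nat.card {ω : ∀ w, F w // Pred (ω u).1}
      = Nat.card {s : F u // Pred s.1} * Nat.card R := by
    rw [Nat.card_congr (e1.trans e2), Nat.card_prod]
  have hO : Nat.card (∀ w, F w) = Nat.card (F u) * Nat.card R := by
    rw [Nat.card_congr (Equiv.piSplitAt u F), Nat.card_prod]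
  have hsub : Nat.card {s : F u // Pred s.1}
      = (((Np pos u).powersetCard (min m (Np pos u).card)).filter Pred).card := by
    rw [Nat.card_congr (Equiv.subtypeSubtypeEquivSubtypeInter _ _),
      Nat.card_eq_fintype_card, Fintype.card_subtype]
    congr 1
    ext s
    simp [Finset.mem_powersetCard, and_assoc]
  have hR0 : 0 < Nat.card R := by
    rw [Nat.card_pos_iff]
    exact ⟨⟨fun w => (hne w.1).some⟩, inferInstance⟩
  have hprob : prob {ω : SampleSpace pos m | Pred (ω u).1}
      = (Nat.card {ω : ∀ w, F w // Pred (ω u).1} : ℝ) / (Nat.card (∀ w, F w) : ℝ) := by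
    have hnum : ({ω : SampleSpace pos m | Pred (ω u).1} : Set (SampleSpace pos m)).ncard
        = Nat.card {ω : ∀ w, F w // Pred (ω u).1} := by
      rw [← Nat.card_coe_set_eq]
      rfl
    have hden : Fintype.card (SampleSpace pos m) = Nat.card (∀ w, F w) :=
      (Nat.card_eq_fintype_card).symm
    unfold prob
    rw [hnum, hden]
  have hcR : ((Nat.card R : ℝ)) ≠ 0 := by
    have : (0:ℝ) < (Nat.card R : ℝ) := by exact_mod_cast hR0
    exact this.ne'
  rw [hprob, hE, hO, hsub, hfib u]
  push_cast
  rw [mul_div_mul_right _ _ hcR]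

set_option maxHeartbeats 2000000 in
/-- concentration of `W^{(u,v)}`. -/
theorem West_concentration
    {V : Type*} [Fintype V] [DecidableEq V] (pos : V → V → Bool)
    (hsymm : ∀ u v, pos u v = pos v u) (hrefl : ∀ u, pos u u = true)
    (ε : ℝ) (hε0 : 0 < ε) (hε1 : ε < 1) (u v : V)
    (h : ((Np pos u).card : ℝ) / 2 ≤ ((Np pos u ∩ Np pos v).card : ℝ)) :
    prob {ω : SampleSpace pos (mSample V ε) |
        West pos ω u v ≤ (1 - ε) * ((Np pos u ∩ Np pos v).card : ℝ)} ≤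
      1 / (Fintype.card V : ℝ) ^ 4 ∧
    prob {ω : SampleSpace pos (mSample V ε) |
        (1 + ε) * ((Np pos u ∩ Np pos v).card : ℝ) ≤ West pos ω u v} ≤
      1 / (Fintype.card V : ℝ) ^ 4 := by
  classical
  set n := Fintype.card V with hn
  set m := mSample V ε with hmdef
  set N := (Np pos u).card with hNdef
  set A := Np pos u ∩ Np pos v with hAdef
  set X := A.card with hXdef
  have hnpos : 0 < n := Fintype.card_pos_iff.mpr ⟨u⟩
  have hnR : (0:ℝ) < (n:ℝ) := by exact_mod_cast hnpos
  have hNpos : 0 < N := by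
    apply Finset.card_pos.mpr
    exact ⟨u, by simp [Np, hrefl u]⟩
  have hNR : (0:ℝ) < (N:ℝ) := by exact_mod_cast hNpos
  have hXR : (0:ℝ) < (X:ℝ) := by
    have h2 : (0:ℝ) < (N:ℝ)/2 := by positivity
    linarith
  have hRHS : (0:ℝ) < 1/(n:ℝ)^4 := by positivity
  have hAP : A ⊆ Np pos u := Finset.inter_subset_left
  have hXN : X ≤ N := Finset.card_le_card hAP
  have hXNR : (X:ℝ) ≤ (N:ℝ) := by exact_mod_cast hXN
  by_cases hcase : m ≤ N
  swap
  · -- deterministic case: both events are empty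
    constructor
    · have hempty : {ω : SampleSpace pos m |
          West pos ω u v ≤ (1 - ε) * (X:ℝ)} = ∅ := by
        ext ω
        simp only [Set.mem_setOf_eq, Set.mem_empty_iff_false, iff_false, West, ← hNdef, ← hAdef, ← hXdef, if_neg hcase]
        push_neg
        nlinarith
      rw [hempty]
      unfold prob
      simp only [Set.ncard_empty, Nat.cast_zero, zero_div]
      linarith
    · have hempty : {ω : SampleSpace pos m |
          (1 + ε) * (X:ℝ) ≤ West pos ω u v} = ∅ := by
        ext ω
        simp only [Set.mem_setOf_eq, Set.mem_empty_iff_false, iff_false, West, ← hNdef, ← hAdef, ← hXdef, if_neg hcase]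
        push_neg
        nlinarith
      rw [hempty]
      unfold prob
      simp only [Set.ncard_empty, Nat.cast_zero, zero_div]
      linarith
  -- main case : m ≤ N
  have hkmin : min m N = m := min_eq_left hcase
  have hChoosePos : (0:ℝ) < ((N.choose m : ℕ) : ℝ) := by
    exact_mod_cast Nat.choose_pos hcase
  -- log bounds
  have hLdef : (0:ℝ) ≤ ε/2 := by linarith
  set L := Real.log (1 + ε/2) with hL
  have hL1 : L ≤ ε/2 := by
    have := Real.log_le_sub_one_of_pos (x := 1 + ε/2) (by linarith)
    linarith
  have hL2 : ε/2 - ε^2/8 ≤ L := by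
    have := aux_log_quadratic_lb hLdef
    have heq : (ε/2) - (ε/2)^2/2 = ε/2 - ε^2/8 := by ring
    linarith [heq ▸ this]
  have hs0 : 0 ≤ ε/2 - L := by linarith
  have hs1 : ε/2 - L ≤ ε^2/8 := by linarith
  -- m is large
  have hmlog : (32/ε^2) * Real.log n ≤ (m:ℝ) := Nat.le_ceil _
  have hlogn : 0 ≤ Real.log n := Real.log_nonneg (by exact_mod_cast hnpos)
  have hfinal : Real.exp (-(ε^2 * m/8)) ≤ 1/(n:ℝ)^4 := by
    have h4 : 4 * Real.log n ≤ ε^2 * m/8 := by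
      have hmul := mul_le_mul_of_nonneg_left hmlog (le_of_lt (by positivity : (0:ℝ) < ε^2/8))
      have : ε^2/8 * ((32/ε^2) * Real.log n) = 4 * Real.log n := by
        field_simp
        ring
      linarith [this ▸ hmul]
    have hstep : Real.exp (-(ε^2 * m/8)) ≤ Real.exp (-(4 * Real.log n)) := by
      apply Real.exp_le_exp.mpr
      linarith
    have hexp : Real.exp (-(4 * Real.log n)) = 1/(n:ℝ)^4 := by
      rw [Real.exp_neg, show (4:ℝ) * Real.log n = ((4:ℕ):ℝ) * Real.log n by norm_num,
        Real.exp_nat_mul, Real.exp_log hnR]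
      rw [one_div]
    linarith [hexp ▸ hstep]
  -- quantities
  set b : ℝ := (m:ℝ) * (X:ℝ) / (N:ℝ) with hb
  have hb0 : 0 ≤ b := by positivity
  have hbm : (m:ℝ)/2 ≤ b := by
    rw [hb, div_le_div_iff₀ (by norm_num : (0:ℝ) < 2) hNR]
    nlinarith [h]
  have hbmle : b ≤ (m:ℝ) := by
    rw [hb, div_le_iff₀ hNR]
    nlinarith [hXNR, Nat.cast_nonneg (α := ℝ) m]
  -- the intersection rewriting
  have hintr : ∀ s : Finset V, s ∈ (Np pos u).powersetCard m →
      s ∩ Np pos v = s ∩ A := by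
    intro s hs
    rw [Finset.mem_powersetCard] at hs
    rw [hAdef, ← Finset.inter_assoc, Finset.inter_eq_left.mpr hs.1]
  constructor
  · -- lower tail
    set A' := Np pos u \ A with hA'def
    have hA'P : A' ⊆ Np pos u := Finset.sdiff_subset
    have hA'card : ((A'.card:ℕ):ℝ) = (N:ℝ) - (X:ℝ) := by
      rw [hA'def, Finset.card_sdiff_of_subset hAP, ← hNdef, ← hXdef, Nat.cast_sub hXN]
    set r₁ : ℝ := (m:ℝ) - (1-ε) * ((m:ℝ) * (X:ℝ) / (N:ℝ)) with hr₁
    set Pred₁ : Finset V → Prop :=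
      fun s => (N:ℝ)/(m:ℝ) * ((s ∩ Np pos v).card : ℝ) ≤ (1-ε) * (X:ℝ) with hPred₁
    have hsetEq : {ω : SampleSpace pos m | West pos ω u v ≤ (1 - ε) * (X:ℝ)}
        = {ω : SampleSpace pos m | Pred₁ (ω u).1} := by
      ext ω
      simp only [Set.mem_setOf_eq, West, ← hNdef, if_pos hcase, hPred₁]
    rw [hsetEq, aux_prob_coord pos m u Pred₁, hkmin]
    have hPredImp : ∀ s ∈ (Np pos u).powersetCard m, Pred₁ s → r₁ ≤ ((s ∩ A').card : ℝ) := by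
      intro s hs hp
      have hsmem := hs
      rw [Finset.mem_powersetCard] at hsmem
      have hsplit : (s ∩ A).card + (s ∩ A').card = m := by
        have hdisj : Disjoint (s ∩ A) (s ∩ A') := by
          apply Finset.disjoint_of_subset_left Finset.inter_subset_right
          apply Finset.disjoint_of_subset_right Finset.inter_subset_right
          exact Finset.disjoint_sdiff
        have hAA' : A ∪ A' = Np pos u := by
          rw [hA'def]
          exact Finset.union_sdiff_of_subset hAP
        have hun : (s ∩ A) ∪ (s ∩ A') = s := by
          rw [← Finset.inter_union_distrib_left, hAA']
          exact Finset.inter_eq_left.mpr hsmem.1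
        rw [← Finset.card_union_of_disjoint hdisj, hun, hsmem.2]
      rw [hPred₁, hintr s hs] at hp
      by_cases hm0 : m = 0
      · rw [hr₁, hm0]
        push_cast
        rw [show (0:ℝ) - (1-ε) * (0 * (X:ℝ) / (N:ℝ)) = 0 by ring]
        positivity
      · have hmR : (0:ℝ) < (m:ℝ) := by exact_mod_cast Nat.pos_of_ne_zero hm0
        have hZleN : ((s ∩ A).card : ℝ) * (N:ℝ) ≤ (1-ε) * ((m:ℝ) * (X:ℝ)) := by
          rw [div_mul_eq_mul_div, div_le_iff₀ hmR] at hp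
          nlinarith [hp]
        have hZle : ((s ∩ A).card : ℝ) ≤ (1-ε) * ((m:ℝ) * (X:ℝ) / (N:ℝ)) := by
          rw [show (1-ε) * ((m:ℝ) * (X:ℝ) / (N:ℝ))
              = ((1-ε) * ((m:ℝ) * (X:ℝ))) / (N:ℝ) by ring, le_div_iff₀ hNR]
          exact hZleN
        have hcast : ((s ∩ A').card : ℝ) = (m:ℝ) - ((s ∩ A).card : ℝ) := by
          have := congrArg (Nat.cast (R := ℝ)) hsplit
          push_cast at this
          linarith
        rw [hcast, hr₁]
        linarith
    have htail := aux_tail (Np pos u) A' hA'P hcase hNpos hLdef Pred₁ hPredImp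
    rw [hA'card] at htail
    have hprob_le : ((((Np pos u).powersetCard m).filter Pred₁).card : ℝ) / ((N.choose m : ℕ) : ℝ)
        ≤ Real.exp (ε/2 * (m:ℝ) * ((N:ℝ) - (X:ℝ)) / (N:ℝ) - r₁ * L) := by
      rw [div_le_iff₀ hChoosePos]
      calc ((((Np pos u).powersetCard m).filter Pred₁).card : ℝ)
          ≤ ((N.choose m : ℕ) : ℝ) * Real.exp (ε/2 * (m:ℝ) * ((N:ℝ) - (X:ℝ)) / (N:ℝ) - r₁ * L) := htail
        _ = Real.exp (ε/2 * (m:ℝ) * ((N:ℝ) - (X:ℝ)) / (N:ℝ) - r₁ * L) * ((N.choose m : ℕ) : ℝ) := by ring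
    refine le_trans hprob_le (le_trans ?_ hfinal)
    apply Real.exp_le_exp.mpr
    -- numeric inequality
    set a : ℝ := (m:ℝ) * ((N:ℝ) - (X:ℝ)) / (N:ℝ) with ha
    have hab : a + b = (m:ℝ) := by
      rw [ha, hb]
      field_simp
      ring
    have ha0 : 0 ≤ a := by
      rw [ha]
      have : (0:ℝ) ≤ (N:ℝ) - (X:ℝ) := by linarith
      positivity
    have hab2 : a ≤ b := by linarith
    have hExp1 : ε/2 * (m:ℝ) * ((N:ℝ) - (X:ℝ)) / (N:ℝ) = ε/2 * a := by
      rw [ha]; ring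
    have hr₁ab : r₁ = a + ε * b := by
      rw [hr₁, hb]
      linarith [hab]
    rw [hExp1, hr₁ab, ← hab]
    -- goal : ε/2 * a - (a + ε*b) * L ≤ -(ε^2*(a+b)/8)
    nlinarith [mul_le_mul_of_nonneg_left hs1 (by positivity : (0:ℝ) ≤ a + ε * b),
      mul_nonneg hs0 ha0, mul_nonneg (mul_nonneg hε0.le hε0.le) (sub_nonneg.mpr hab2),
      mul_nonneg hs0 (mul_nonneg hε0.le hb0),
      mul_nonneg (mul_nonneg hε0.le (mul_nonneg hε0.le hε0.le)) hb0,
      mul_le_mul_of_nonneg_left hε1.le (by positivity : (0:ℝ) ≤ ε^2 * b)]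
  · -- upper tail
    set r₂ : ℝ := (1+ε) * ((m:ℝ) * (X:ℝ) / (N:ℝ)) with hr₂
    set Pred₂ : Finset V → Prop :=
      fun s => (1+ε) * (X:ℝ) ≤ (N:ℝ)/(m:ℝ) * ((s ∩ Np pos v).card : ℝ) with hPred₂
    have hsetEq : {ω : SampleSpace pos m | (1 + ε) * (X:ℝ) ≤ West pos ω u v}
        = {ω : SampleSpace pos m | Pred₂ (ω u).1} := by
      ext ω
      simp only [Set.mem_setOf_eq, West, ← hNdef, if_pos hcase, hPred₂]
    rw [hsetEq, aux_prob_coord pos m u Pred₂, hkmin]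
    have hPredImp : ∀ s ∈ (Np pos u).powersetCard m, Pred₂ s → r₂ ≤ ((s ∩ A).card : ℝ) := by
      intro s hs hp
      rw [hPred₂, hintr s hs] at hp
      by_cases hm0 : m = 0
      · exfalso
        rw [hm0] at hp
        push_cast at hp
        rw [div_zero, zero_mul] at hp
        nlinarith
      · have hmR : (0:ℝ) < (m:ℝ) := by exact_mod_cast Nat.pos_of_ne_zero hm0
        have hp' : (1+ε) * (X:ℝ) * (m:ℝ) ≤ (N:ℝ) * ((s ∩ A).card : ℝ) := by
          rw [div_mul_eq_mul_div, le_div_iff₀ hmR] at hp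
          nlinarith [hp]
        rw [hr₂, show (1+ε) * ((m:ℝ) * (X:ℝ) / (N:ℝ))
            = ((1+ε) * ((m:ℝ) * (X:ℝ))) / (N:ℝ) by ring, div_le_iff₀ hNR]
        nlinarith [hp']
    have htail := aux_tail (Np pos u) A hAP hcase hNpos hLdef Pred₂ hPredImp
    have hprob_le : ((((Np pos u).powersetCard m).filter Pred₂).card : ℝ) / ((N.choose m : ℕ) : ℝ)
        ≤ Real.exp (ε/2 * (m:ℝ) * (X:ℝ) / (N:ℝ) - r₂ * L) := by
      rw [div_le_iff₀ hChoosePos]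
      calc ((((Np pos u).powersetCard m).filter Pred₂).card : ℝ)
          ≤ ((N.choose m : ℕ) : ℝ) * Real.exp (ε/2 * (m:ℝ) * (X:ℝ) / (N:ℝ) - r₂ * L) := htail
        _ = Real.exp (ε/2 * (m:ℝ) * (X:ℝ) / (N:ℝ) - r₂ * L) * ((N.choose m : ℕ) : ℝ) := by ring
    refine le_trans hprob_le (le_trans ?_ hfinal)
    apply Real.exp_le_exp.mpr
    have hExp1 : ε/2 * (m:ℝ) * (X:ℝ) / (N:ℝ) = ε/2 * b := by rw [hb]; ring
    have hr₂b : r₂ = (1+ε) * b := by rw [hr₂, hb]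
    rw [hExp1, hr₂b]
    nlinarith [mul_le_mul_of_nonneg_left hs1 (by positivity : (0:ℝ) ≤ (1+ε) * b),
      mul_le_mul_of_nonneg_left hbm (by positivity : (0:ℝ) ≤ ε^2/4),
      mul_nonneg hs0 hb0, mul_nonneg (mul_nonneg hε0.le hε0.le) hb0,
      mul_nonneg (mul_nonneg hε0.le hs0) hb0,
      mul_le_mul_of_nonneg_right hε1.le (mul_nonneg (mul_nonneg hε0.le hε0.le) hb0)]
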